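/- Let μ be a compactly supported probability measure on ℝ with λ_max = sup(supp μ). Assume s_* = lim_{z↓λ_max} S_μ(z) is finite (equivalently ∫ μ(dλ)/(λ_max − λ) < ∞) and that ∫ |log(λ_max − λ)| μ(dλ) < ∞. Let σ > 0 and β > 0 satisfy βσ² > −s_*. Then inf_{γ > βλ_max} [ γσ² − ∫ μ(dλ) log(γ − βλ) ] = β λ_max σ² − log β − ∫ μ(dλ) log(λ_max − λ), and this infimum is not attained in (βλ_max, ∞). -/

import Mathlib

open MeasureTheory Filter Topology

noncomputable section

/-- The supremum of the support of a (compactly supported) measure on `ℝ`: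
`λ_max = sup(supp μ)`. -/
def suppMax (μ : Measure ℝ) : ℝ := sInf {r : ℝ | μ (Set.Ioi r) = 0}

/-- The Stieltjes transform `S_μ(z) = ∫ μ(dλ)/(λ − z)`. -/
def stieltjesT (μ : Measure ℝ) (z : ℝ) : ℝ := ∫ l, (l - z)⁻¹ ∂μ

/-- `s_* = lim_{z↓λ_max} S_μ(z) ∈ [−∞, 0)`, realized (using monotonicity of `S_μ`) as the
infimum of `S_μ` over `(λ_max, ∞)`, viewed in the extended reals. -/
def sStarE (μ : Measure ℝ) : EReal :=
  ⨅ z ∈ Set.Ioi (suppMax μ), ((stieltjesT μ z : ℝ) : EReal)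

/-- The `R`-transform `R_μ(z) = S_μ^{-1}(−z) − 1/z`, where `S_μ^{-1}` is the inverse of the
restriction of the Stieltjes transform to `(λ_max, ∞)`. -/
def Rtransform (μ : Measure ℝ) (z : ℝ) : ℝ :=
  Function.invFunOn (stieltjesT μ) (Set.Ioi (suppMax μ)) (-z) - 1 / z

/-- Let `μ` be a compactly supported probability measure on `ℝ` with
`λ_max = sup(supp μ)`. Assume `s_* = lim_{z↓λ_max} S_μ(z)` is finite and that
`∫ |log(λ_max − λ)| μ(dλ) < ∞`. Let `σ > 0` and `β > 0` satisfy `βσ² > −s_*`. Then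
`inf_{γ > βλ_max} [ γσ² − ∫ μ(dλ) log(γ − βλ) ] = β λ_max σ² − log β − ∫ μ(dλ) log(λ_max − λ)`,
and this infimum is not attained in `(βλ_max, ∞)`. -/
lemma logSubBound (x y : ℝ) (hx : 0 < x) (hxy : x ≤ y) :
    Real.log y - Real.log x ≤ (y - x) * x⁻¹ := by
  rw [← Real.log_div (by linarith) (by linarith)]
  have h0 : (0:ℝ) < y / x := div_pos (by linarith) hx
  have h1 := Real.log_le_sub_one_of_pos h0
  have h2 : y / x - 1 = (y - x) * x⁻¹ := by field_simp
  linarith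

lemma auxBasic (μ : Measure ℝ) [IsProbabilityMeasure μ]
    (hcomp : ∃ K : Set ℝ, IsCompact K ∧ μ Kᶜ = 0) :
    ∃ M : ℝ, -M ≤ suppMax μ ∧ μ (Set.Ioi (suppMax μ)) = 0 ∧ μ (Set.Iio (-M)) = 0 := by
  obtain ⟨K, hK, hKn⟩ := hcomp
  obtain ⟨M, hKM⟩ : ∃ M, K ⊆ Set.Icc (-M) M := by
    obtain ⟨M, hM⟩ := hK.isBounded.subset_closedBall 0
    exact ⟨M, by simpa [Real.closedBall_eq_Icc] using hM⟩
  set R := {r : ℝ | μ (Set.Ioi r) = 0} with hR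
  have hMR : M ∈ R := by
    refine measure_mono_null ?_ hKn
    intro x hx hxK
    exact absurd ((hKM hxK).2) (not_le.mpr hx)
  have hne : R.Nonempty := ⟨M, hMR⟩
  have hlb : ∀ r ∈ R, -M ≤ r := by
    intro r hr
    by_contra h
    push_neg at h
    have hIic : μ (Set.Iic r) = 0 := by
      refine measure_mono_null ?_ hKn
      intro x hx hxK
      have := (hKM hxK).1
      simp only [Set.mem_Iic] at hx
      linarith
    have h1 : (μ Set.univ : ENNReal) ≤ μ (Set.Iic r) + μ (Set.Ioi r) := by
      rw [show (Set.univ : Set ℝ) = Set.Iic r ∪ Set.Ioi r by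
        ext x; simp [le_or_gt]]
      exact measure_union_le _ _
    rw [hIic, hr, measure_univ] at h1
    simp at h1
  have hbdd : BddBelow R := ⟨-M, hlb⟩
  refine ⟨M, le_csInf hne hlb, ?_, ?_⟩
  · have hU : Set.Ioi (suppMax μ) = ⋃ n : ℕ, Set.Ioi (suppMax μ + ((n:ℝ)+1)⁻¹) := by
      ext x
      simp only [Set.mem_Ioi, Set.mem_iUnion]
      constructor
      · intro hx
        obtain ⟨n, hn⟩ := exists_nat_one_div_lt (show (0:ℝ) < x - suppMax μ by linarith)
        rw [one_div] at hn
        exact ⟨n, by linarith⟩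
      · rintro ⟨n, hn⟩
        have : (0:ℝ) < ((n:ℝ)+1)⁻¹ := by positivity
        linarith
    rw [hU]
    apply measure_iUnion_null
    intro n
    have hlt : sInf R < suppMax μ + ((n:ℝ)+1)⁻¹ := by
      have : (0:ℝ) < ((n:ℝ)+1)⁻¹ := by positivity
      simp only [suppMax]
      linarith [le_refl (sInf R)]
    obtain ⟨r, hrR, hr⟩ := (csInf_lt_iff hbdd hne).mp hlt
    exact measure_mono_null (Set.Ioi_subset_Ioi hr.le) hrR
  · refine measure_mono_null ?_ hKn
    intro x hx hxK
    have := (hKM hxK).1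
    simp only [Set.mem_Iio] at hx
    linarith

theorem statement16
    (μ : Measure ℝ) [IsProbabilityMeasure μ]
    (hcomp : ∃ K : Set ℝ, IsCompact K ∧ μ Kᶜ = 0)
    (hfin : sStarE μ ≠ ⊥)
    (hlog : Integrable (fun l => Real.log (suppMax μ - l)) μ)
    (σ β : ℝ) (hσ : 0 < σ) (hβ : 0 < β)
    (hcond : -(sStarE μ) < ((β * σ ^ 2 : ℝ) : EReal)) :
    sInf {y : ℝ | ∃ γ : ℝ, β * suppMax μ < γ ∧
        y = γ * σ ^ 2 - ∫ l, Real.log (γ - β * l) ∂μ}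
      = (β * suppMax μ * σ ^ 2 - Real.log β - ∫ l, Real.log (suppMax μ - l) ∂μ) ∧
    ∀ γ : ℝ, β * suppMax μ < γ →
      (γ * σ ^ 2 - ∫ l, Real.log (γ - β * l) ∂μ)
        ≠ (β * suppMax μ * σ ^ 2 - Real.log β - ∫ l, Real.log (suppMax μ - l) ∂μ) := by
  obtain ⟨M, hMlm, hIoi, hIio⟩ := auxBasic μ hcomp
  set lm := suppMax μ with hlm
  -- a.e. bounds
  have hae : ∀ᵐ l ∂μ, l ≤ lm ∧ -M ≤ l := by
    have h1 : ∀ᵐ l ∂μ, l ≤ lm := by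
      rw [ae_iff]
      simp only [not_le]; exact hIoi
    have h2 : ∀ᵐ l ∂μ, -M ≤ l := by
      rw [ae_iff]
      simp only [not_le]; exact hIio
    exact h1.and h2
  -- no atom at lm
  have hatom : μ {lm} = 0 := by
    by_contra hp
    set p := (μ {lm}).toReal with hpdef
    have hppos : 0 < p := ENNReal.toReal_pos hp (measure_ne_top μ _)
    have key : ∀ z : ℝ, lm < z → stieltjesT μ z ≤ p * (lm - z)⁻¹ := by
      intro z hz
      have hzpos : 0 < z - lm := by linarith
      have hmeas : AEStronglyMeasurable (fun l : ℝ => (l - z)⁻¹) μ :=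
        ((measurable_id.sub_const z).inv).aestronglyMeasurable
      have hint : Integrable (fun l : ℝ => (l - z)⁻¹) μ := by
        apply (integrable_const ((z - lm)⁻¹)).mono' hmeas
        filter_upwards [hae] with l hl
        rw [Real.norm_eq_abs, abs_inv, abs_of_neg (by linarith [hl.1] : l - z < 0)]
        rw [neg_sub]
        exact inv_anti₀ hzpos (by linarith [hl.1])
      have hind : Integrable ((({lm} : Set ℝ)).indicator (fun _ => (lm - z)⁻¹)) μ :=
        (integrable_const _).indicator (measurableSet_singleton lm)
      have hle : ∀ᵐ l ∂μ, (l - z)⁻¹ ≤ (({lm} : Set ℝ)).indicator (fun _ => (lm - z)⁻¹) l := by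
        filter_upwards [hae] with l hl
        by_cases hl2 : l = lm
        · subst hl2
          rw [Set.indicator_of_mem (Set.mem_singleton lm)]
        · rw [Set.indicator_of_notMem (by simp [hl2] : l ∉ ({lm} : Set ℝ))]
          exact inv_nonpos.mpr (by linarith [hl.1])
      have h1 : stieltjesT μ z ≤ ∫ l, (({lm} : Set ℝ)).indicator (fun _ => (lm - z)⁻¹) l ∂μ :=
        integral_mono_ae hint hind hle
      rw [integral_indicator_const _ (measurableSet_singleton lm), smul_eq_mul] at h1
      rw [hpdef]
      exact h1
    have hub : ∀ z : ℝ, lm < z → sStarE μ ≤ ((stieltjesT μ z : ℝ) : EReal) := by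
      intro z hz
      exact biInf_le _ (Set.mem_Ioi.mpr hz)
    have hnetop : sStarE μ ≠ ⊤ :=
      ne_top_of_le_ne_top (EReal.coe_ne_top _) (hub (lm + 1) (by linarith))
    set t := (sStarE μ).toReal with htdef
    have ht : (t : EReal) = sStarE μ := EReal.coe_toReal hnetop hfin
    have ht' : ∀ z : ℝ, lm < z → t ≤ stieltjesT μ z := by
      intro z hz
      have h := hub z hz
      rw [← ht] at h
      exact_mod_cast h
    set δ := min 1 (p / (|t| + 1)) with hδdef
    have hδpos : 0 < δ := lt_min one_pos (div_pos hppos (by positivity))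
    have hz := key (lm + δ) (by linarith)
    have h1 : p * (lm - (lm + δ))⁻¹ = -(p / δ) := by
      rw [show lm - (lm + δ) = -δ by ring, inv_neg]
      field_simp
    rw [h1] at hz
    have h2 : |t| + 1 ≤ p / δ := by
      rw [le_div_iff₀ hδpos]
      calc (|t| + 1) * δ ≤ (|t| + 1) * (p / (|t| + 1)) := by
            apply mul_le_mul_of_nonneg_left (min_le_right _ _) (by positivity)
        _ = p := by field_simp
    have h3 := ht' (lm + δ) (by linarith)
    have h4 := neg_abs_le t
    linarith
  have haelt : ∀ᵐ l ∂μ, l < lm ∧ -M ≤ l := by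
    have hne : ∀ᵐ l ∂μ, l ≠ lm := by
      rw [ae_iff]
      simpa [Set.setOf_eq_eq_singleton] using hatom
    filter_upwards [hae, hne] with l h1 h2
    exact ⟨lt_of_le_of_ne h1.1 h2, h1.2⟩
  -- integrability
  have hmeaslog : ∀ γ : ℝ, AEStronglyMeasurable (fun l => Real.log (γ - β * l)) μ :=
    fun γ => (Real.measurable_log.comp
      (measurable_const.sub (measurable_id.const_mul β))).aestronglyMeasurable
  have hintlog : ∀ γ : ℝ, β * lm < γ → Integrable (fun l => Real.log (γ - β * l)) μ := by
    intro γ hγ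
    apply (integrable_const (|Real.log (γ - β * lm)| + |Real.log (γ + β * M)|)).mono'
      (hmeaslog γ)
    filter_upwards [hae] with l hl
    have hb1 : β * l ≤ β * lm := mul_le_mul_of_nonneg_left hl.1 hβ.le
    have hb2 : -(β * M) ≤ β * l := by nlinarith [hl.2]
    have h1 : 0 < γ - β * lm := by linarith
    have h2 : γ - β * lm ≤ γ - β * l := by linarith
    have h3 : γ - β * l ≤ γ + β * M := by linarith
    have hm1 : Real.log (γ - β * lm) ≤ Real.log (γ - β * l) := Real.log_le_log h1 h2
    have hm2 : Real.log (γ - β * l) ≤ Real.log (γ + β * M) :=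
      Real.log_le_log (by linarith) h3
    rw [Real.norm_eq_abs, abs_le]
    constructor
    · linarith [neg_abs_le (Real.log (γ - β * lm)), abs_nonneg (Real.log (γ + β * M))]
    · linarith [le_abs_self (Real.log (γ + β * M)), abs_nonneg (Real.log (γ - β * lm))]
  have hintinv : ∀ γ : ℝ, β * lm < γ → Integrable (fun l => (γ - β * l)⁻¹) μ := by
    intro γ hγ
    apply (integrable_const ((γ - β * lm)⁻¹)).mono'
      ((measurable_const.sub (measurable_id.const_mul β)).inv).aestronglyMeasurable
    filter_upwards [hae] with l hl
    have hb1 : β * l ≤ β * lm := mul_le_mul_of_nonneg_left hl.1 hβ.le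
    have h1 : 0 < γ - β * lm := by linarith
    have h2 : 0 < γ - β * l := by linarith
    simp only [Real.norm_eq_abs, id_eq, Pi.inv_apply, Pi.sub_apply]
    rw [abs_of_pos (inv_pos.mpr h2)]
    exact inv_anti₀ h1 (by linarith)
  -- Stieltjes bound
  have hSbound : ∀ γ : ℝ, β * lm < γ → ∫ l, (γ - β * l)⁻¹ ∂μ < σ ^ 2 := by
    intro γ hγ
    have hz : lm < γ / β := (lt_div_iff₀ hβ).mpr (by linarith)
    have h1 : sStarE μ ≤ ((stieltjesT μ (γ / β) : ℝ) : EReal) :=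
      biInf_le _ (Set.mem_Ioi.mpr hz)
    have h2 : ((-(stieltjesT μ (γ / β)) : ℝ) : EReal) < ((β * σ ^ 2 : ℝ) : EReal) := by
      rw [EReal.coe_neg]
      exact lt_of_le_of_lt (EReal.neg_le_neg_iff.mpr h1) hcond
    have h3 : -(stieltjesT μ (γ / β)) < β * σ ^ 2 := EReal.coe_lt_coe_iff.mp h2
    have h4 : ∫ l, (γ - β * l)⁻¹ ∂μ = β⁻¹ * -(stieltjesT μ (γ / β)) := by
      have hptw : ∀ l : ℝ, (γ - β * l)⁻¹ = β⁻¹ * -((l - γ / β)⁻¹) := by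
        intro l
        rw [show (l - γ / β) = -(γ / β - l) by ring, inv_neg, neg_neg,
          show γ - β * l = β * (γ / β - l) by field_simp, mul_inv]
      simp_rw [hptw]
      rw [integral_const_mul]
      congr 1
      rw [stieltjesT, ← integral_neg]
    rw [h4]
    calc β⁻¹ * -(stieltjesT μ (γ / β)) < β⁻¹ * (β * σ ^ 2) :=
          mul_lt_mul_of_pos_left h3 (inv_pos.mpr hβ)
      _ = σ ^ 2 := by field_simp
  set f : ℝ → ℝ := fun γ => γ * σ ^ 2 - ∫ l, Real.log (γ - β * l) ∂μ with hf
  -- strict monotonicity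
  have hmono : ∀ γ₁ γ₂ : ℝ, β * lm < γ₁ → γ₁ < γ₂ → f γ₁ < f γ₂ := by
    intro γ₁ γ₂ h1 h2
    have hI1 := hintlog γ₁ h1
    have hI2 := hintlog γ₂ (by linarith)
    have hIinv := hintinv γ₁ h1
    have key : (∫ l, Real.log (γ₂ - β * l) ∂μ) - ∫ l, Real.log (γ₁ - β * l) ∂μ
        ≤ (γ₂ - γ₁) * ∫ l, (γ₁ - β * l)⁻¹ ∂μ := by
      rw [← integral_sub hI2 hI1, ← integral_const_mul]
      apply integral_mono_ae (hI2.sub hI1) (hIinv.const_mul _)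
      filter_upwards [hae] with l hl
      have hb1 : β * l ≤ β * lm := mul_le_mul_of_nonneg_left hl.1 hβ.le
      have hx : 0 < γ₁ - β * l := by linarith
      have hxy : γ₁ - β * l ≤ γ₂ - β * l := by linarith
      have := logSubBound (γ₁ - β * l) (γ₂ - β * l) hx hxy
      have heq : (γ₂ - β * l) - (γ₁ - β * l) = γ₂ - γ₁ := by ring
      rw [heq] at this
      exact this
    have hlt := hSbound γ₁ h1
    have h3 : (γ₂ - γ₁) * ∫ l, (γ₁ - β * l)⁻¹ ∂μ < (γ₂ - γ₁) * σ ^ 2 :=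
      mul_lt_mul_of_pos_left hlt (by linarith)
    simp only [hf]
    linarith
  set c : ℝ := β * lm * σ ^ 2 - Real.log β - ∫ l, Real.log (lm - l) ∂μ with hc
  -- pointwise a.e. equality log(β*lm - β*l) = log β + log(lm - l)
  have haeq : (fun l => Real.log (β * lm - β * l))
      =ᵐ[μ] (fun l => Real.log β + Real.log (lm - l)) := by
    filter_upwards [haelt] with l hl
    rw [show β * lm - β * l = β * (lm - l) by ring,
      Real.log_mul hβ.ne' (by linarith [hl.1] : lm - l ≠ 0)]
  have hintlog0 : Integrable (fun l => Real.log (β * lm - β * l)) μ :=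
    (((integrable_const (Real.log β)).add hlog).congr haeq.symm)
  -- the limit
  have hlim : Tendsto f (𝓝[>] (β * lm)) (𝓝 c) := by
    have hIlim : Tendsto (fun γ => ∫ l, Real.log (γ - β * l) ∂μ) (𝓝[>] (β * lm))
        (𝓝 (∫ l, Real.log (β * lm - β * l) ∂μ)) := by
      apply tendsto_integral_filter_of_dominated_convergence
        (fun l => |Real.log (β * lm - β * l)| + |Real.log (β * lm + 1 - β * l)|)
      · exact Eventually.of_forall (fun γ => hmeaslog γ)
      · filter_upwards [Ioo_mem_nhdsGT_of_mem ⟨le_refl _, lt_add_one (β * lm)⟩] with γ hγ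
        filter_upwards [haelt] with l hl
        have hb1 : β * l < β * lm := mul_lt_mul_of_pos_left hl.1 hβ
        have h0 : 0 < β * lm - β * l := by linarith
        have h1 : β * lm - β * l ≤ γ - β * l := by linarith [hγ.1]
        have h2 : γ - β * l ≤ β * lm + 1 - β * l := by linarith [hγ.2]
        have hm1 : Real.log (β * lm - β * l) ≤ Real.log (γ - β * l) := Real.log_le_log h0 h1
        have hm2 : Real.log (γ - β * l) ≤ Real.log (β * lm + 1 - β * l) :=
          Real.log_le_log (by linarith) h2
        rw [Real.norm_eq_abs, abs_le]
        constructor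
        · linarith [neg_abs_le (Real.log (β * lm - β * l)),
            abs_nonneg (Real.log (β * lm + 1 - β * l))]
        · linarith [le_abs_self (Real.log (β * lm + 1 - β * l)),
            abs_nonneg (Real.log (β * lm - β * l))]
      · apply Integrable.add
        · exact hintlog0.abs
        · apply (integrable_const (Real.log (β * lm + 1 + β * M))).mono'
            ((Real.measurable_log.comp
              (measurable_const.sub (measurable_id.const_mul β))).abs).aestronglyMeasurable
          filter_upwards [hae] with l hl
          have hb1 : β * l ≤ β * lm := mul_le_mul_of_nonneg_left hl.1 hβ.le
          have hb2 : -(β * M) ≤ β * l := by nlinarith [hl.2]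
          have h1 : (1:ℝ) ≤ β * lm + 1 - β * l := by linarith
          have h2 : β * lm + 1 - β * l ≤ β * lm + 1 + β * M := by linarith
          have h3 : 0 ≤ Real.log (β * lm + 1 - β * l) := Real.log_nonneg h1
          simp only [Real.norm_eq_abs, Function.comp_apply, id_eq, abs_abs, Pi.sub_apply]
          rw [abs_of_nonneg h3]
          exact Real.log_le_log (by linarith) h2
      · filter_upwards [haelt] with l hl
        have hb1 : β * l < β * lm := mul_lt_mul_of_pos_left hl.1 hβ
        have h0 : β * lm - β * l ≠ 0 := by linarith
        have hcont : ContinuousAt (fun γ : ℝ => Real.log (γ - β * l)) (β * lm) :=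
          (Real.continuousAt_log (by simpa using h0)).comp
            ((continuous_id.sub continuous_const).continuousAt)
        exact hcont.tendsto.mono_left nhdsWithin_le_nhds
    have heq : ∫ l, Real.log (β * lm - β * l) ∂μ
        = Real.log β + ∫ l, Real.log (lm - l) ∂μ := by
      rw [integral_congr_ae haeq, integral_add (integrable_const _) hlog, integral_const]
      simp
    have h2 : Tendsto (fun γ : ℝ => γ * σ ^ 2) (𝓝[>] (β * lm)) (𝓝 (β * lm * σ ^ 2)) :=
      ((continuous_id.mul continuous_const).tendsto _).mono_left nhdsWithin_le_nhds
    have h3 := h2.sub hIlim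
    rw [heq] at h3
    have h4 : β * lm * σ ^ 2 - (Real.log β + ∫ l, Real.log (lm - l) ∂μ) = c := by
      rw [hc]; ring
    rw [h4] at h3
    exact h3
  -- c < f γ for all γ > β lm
  have hgtc : ∀ γ : ℝ, β * lm < γ → c < f γ := by
    intro γ hγ
    have h1 : c ≤ f ((β * lm + γ) / 2) := by
      apply le_of_tendsto hlim
      filter_upwards [Ioo_mem_nhdsGT_of_mem
        ⟨le_refl _, show β * lm < (β * lm + γ) / 2 by linarith⟩] with γ' hγ'
      exact (hmono γ' _ hγ'.1 hγ'.2).le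
    exact lt_of_le_of_lt h1 (hmono _ γ (by linarith) (by linarith))
  constructor
  · apply csInf_eq_of_forall_ge_of_forall_gt_exists_lt
    · exact ⟨f (β * lm + 1), β * lm + 1, by linarith, rfl⟩
    · rintro a ⟨γ, hγ, rfl⟩
      exact (hgtc γ hγ).le
    · intro w hw
      obtain ⟨γ, h1, h2⟩ := ((hlim.eventually (eventually_lt_nhds hw)).and
        eventually_mem_nhdsWithin).exists
      exact ⟨f γ, ⟨γ, h2, rfl⟩, h1⟩
  · intro γ hγ
    exact (hgtc γ hγ).ne'


end
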